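/- Let H be a complex Hilbert space, K a bounded operator on H, and C, C' positive invertible bounded operators that commute with each other, with K, and with every member of a family (T_i)_{i∈I} of bounded operators. If (T_i) is a K-operator frame (A²‖K*x‖² ≤ Σ_i ‖T_i x‖² ≤ B²‖x‖² for all x), then (T_i) is a (C,C')-controlled K-operator frame: there exist constants A', B' > 0 with A'²‖K*x‖² ≤ Σ_i ⟨T_i C x, T_i C' x⟩ ≤ B'²‖x‖² for all x ∈ H. -/

import Mathlib

open scoped ComplexInnerProductSpace NNReal
set_option synthInstance.maxHeartbeats 1000000
set_option maxHeartbeats 1000000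

section aux
variable {H : Type*} [NormedAddCommGroup H] [InnerProductSpace ℂ H] [CompleteSpace H]

/-- everything in the elemental algebra of `a` commutes with `b` if `a` and `star a` do. -/
lemma commute_of_mem_elemental {A : Type*} [CStarAlgebra A] {a b : A}
    (hab : Commute a b) (hab' : Commute (star a) b) {x : A}
    (hx : x ∈ StarAlgebra.elemental ℂ a) : Commute x b := by
  induction hx using StarAlgebra.elemental.induction_on with
  | self => exact hab
  | star_self => exact hab'
  | algebraMap r => exact Algebra.commutes r b
  | add u hu v hv pu pv => exact pu.add_left pv
  | mul u hu v hv pu pv => exact pu.mul_left pv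
  | closure s hs hps v hv =>
    have hclosed : IsClosed {y : A | Commute y b} := by
      have : {y : A | Commute y b} = {y : A | y * b = b * y} := rfl
      rw [this]
      exact isClosed_eq (by fun_prop) (by fun_prop)
    exact hclosed.closure_subset_iff.mpr (fun u hu => hps u hu) hv

lemma cfc_mem_elemental' {A : Type*} [CStarAlgebra A] (f : ℂ → ℂ) (a : A) [IsStarNormal a] :
    cfc f a ∈ StarAlgebra.elemental ℂ a := by
  by_cases h : ContinuousOn f (spectrum ℂ a)
  · rw [cfc_apply f a, cfcHom_eq_of_isStarNormal]
    exact SetLike.coe_mem _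
  · rw [cfc_apply_of_not_continuousOn a h]
    exact zero_mem _

lemma sqrt_commute {a b : H →L[ℂ] H} (ha : 0 ≤ a) (hab : Commute a b) :
    Commute (CFC.sqrt a) b := by
  have hsa : IsSelfAdjoint a := .of_nonneg ha
  have : IsStarNormal a := hsa.isStarNormal
  have h1 : CFC.sqrt a = cfc (fun x : ℝ ↦ ((NNReal.sqrt x.toNNReal : ℝ≥0) : ℝ)) a := by
    rw [CFC.sqrt_eq_cfc, cfc_nnreal_eq_real _ a ha]
  have h2 : CFC.sqrt a
      = cfc (fun z : ℂ ↦ (((NNReal.sqrt z.re.toNNReal : ℝ≥0) : ℝ) : ℂ)) a := by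
    rw [h1, cfc_real_eq_complex]
  rw [h2]
  exact commute_of_mem_elemental hab (by rwa [hsa.star_eq]) (cfc_mem_elemental' _ a)
end aux

theorem stmt_2 {H : Type*} [NormedAddCommGroup H] [InnerProductSpace ℂ H] [CompleteSpace H]
    {I : Type*} (K C C' : H →L[ℂ] H)
    (hC : C.IsPositive) (hC' : C'.IsPositive) (hCu : IsUnit C) (hC'u : IsUnit C')
    (hCC' : C ∘L C' = C' ∘L C) (hCK : C ∘L K = K ∘L C) (hC'K : C' ∘L K = K ∘L C')
    (T : I → (H →L[ℂ] H))
    (hCT : ∀ i, C ∘L T i = T i ∘L C) (hC'T : ∀ i, C' ∘L T i = T i ∘L C')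
    (A B : ℝ) (hA : 0 < A) (hB : 0 < B)
    (hframe : ∀ x : H,
      A ^ 2 * ‖ContinuousLinearMap.adjoint K x‖ ^ 2 ≤ ∑' i, ‖T i x‖ ^ 2 ∧
      ∑' i, ‖T i x‖ ^ 2 ≤ B ^ 2 * ‖x‖ ^ 2) :
    ∃ A' B' : ℝ, 0 < A' ∧ 0 < B' ∧ ∀ x : H,
      A' ^ 2 * ‖ContinuousLinearMap.adjoint K x‖ ^ 2 ≤ ∑' i, (⟪T i (C x), T i (C' x)⟫).re ∧
      ∑' i, (⟪T i (C x), T i (C' x)⟫).re ≤ B' ^ 2 * ‖x‖ ^ 2 := by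
  have h0C : 0 ≤ C := C.nonneg_iff_isPositive.mpr hC
  have h0C' : 0 ≤ C' := C'.nonneg_iff_isPositive.mpr hC'
  have hcomm : Commute C C' := hCC'
  -- positivity of the product
  set S := CFC.sqrt C with hSdef
  have hScomm : Commute S C' := sqrt_commute h0C hcomm
  have hSS : S * S = C := CFC.sqrt_mul_sqrt_self C h0C
  have hP : 0 ≤ C * C' := by
    have : C * C' = S * C' * S := by
      rw [← hSS, mul_assoc, mul_assoc, hScomm.eq]
    rw [this]
    exact IsSelfAdjoint.conjugate_nonneg h0C' (.of_nonneg (CFC.sqrt_nonneg _))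
  set Sp := CFC.sqrt (C * C') with hSpdef
  have hSp2 : Sp * Sp = C * C' := CFC.sqrt_mul_sqrt_self _ hP
  have hSpsa : IsSelfAdjoint Sp := .of_nonneg (CFC.sqrt_nonneg _)
  -- Sp is invertible
  have hPu : IsUnit (C * C') := hCu.mul hC'u
  have hSpP : Commute Sp (C * C') := by
    rw [← hSp2]; exact (Commute.refl Sp).mul_right (Commute.refl Sp)
  have hSpu : IsUnit Sp := by
    refine isUnit_iff_exists.mpr ⟨Sp * ↑hPu.unit⁻¹, ?_, ?_⟩
    · rw [← mul_assoc, hSp2]; exact hPu.mul_val_inv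
    · have hinv : Commute Sp ↑hPu.unit⁻¹ :=
        Commute.units_inv_right (by rw [hPu.unit_spec]; exact hSpP)
      rw [hinv.eq, mul_assoc, hSp2]; exact hPu.val_inv_mul
  set Q : H →L[ℂ] H := ↑hSpu.unit⁻¹ with hQdef
  have hQSp : ∀ y : H, Q (Sp y) = y := by
    intro y
    have h : ((↑hSpu.unit⁻¹ : H →L[ℂ] H) * Sp) = 1 := hSpu.val_inv_mul
    calc Q (Sp y) = ((↑hSpu.unit⁻¹ : H →L[ℂ] H) * Sp) y := rfl
      _ = (1 : H →L[ℂ] H) y := by rw [h]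
      _ = y := rfl
  -- pointwise identity
  have key : ∀ (i : I) (x : H), (⟪T i (C x), T i (C' x)⟫).re = ‖Sp (T i x)‖ ^ 2 := by
    intro i x
    have h1 : T i (C x) = C (T i x) := by
      have := congrArg (fun f : H →L[ℂ] H => f x) (hCT i)
      simpa using this.symm
    have h2 : T i (C' x) = C' (T i x) := by
      have := congrArg (fun f : H →L[ℂ] H => f x) (hC'T i)
      simpa using this.symm
    rw [h1, h2]
    set y := T i x
    have hCad : ContinuousLinearMap.adjoint C = C := hC.isSelfAdjoint
    have hSpad : ContinuousLinearMap.adjoint Sp = Sp := hSpsa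
    have happ : C (C' y) = Sp (Sp y) := by
      have := congrArg (fun f : H →L[ℂ] H => f y) hSp2
      simpa using this.symm
    have : ⟪C y, C' y⟫ = ⟪Sp y, Sp y⟫ := by
      calc ⟪C y, C' y⟫ = ⟪ContinuousLinearMap.adjoint C y, C' y⟫ := by rw [hCad]
        _ = ⟪y, C (C' y)⟫ := ContinuousLinearMap.adjoint_inner_left C (C' y) y
        _ = ⟪y, Sp (Sp y)⟫ := by rw [happ]
        _ = ⟪y, ContinuousLinearMap.adjoint Sp (Sp y)⟫ := by rw [hSpad]
        _ = ⟪Sp y, Sp y⟫ := ContinuousLinearMap.adjoint_inner_right Sp y (Sp y)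
    rw [this]
    have := inner_self_eq_norm_sq (𝕜 := ℂ) (Sp y)
    simpa [RCLike.re_to_complex] using this
  -- constants
  set N : ℝ := max ‖Q‖ 1 with hNdef
  have hN1 : (1 : ℝ) ≤ N := le_max_right _ _
  have hN0 : 0 < N := lt_of_lt_of_le one_pos hN1
  set M : ℝ := ‖Sp‖ + 1 with hMdef
  have hM0 : 0 < M := by positivity
  -- per-term bounds
  have hlow : ∀ y : H, ‖y‖ ^ 2 / N ^ 2 ≤ ‖Sp y‖ ^ 2 := by
    intro y
    rw [div_le_iff₀ (by positivity)]
    have h1 : ‖y‖ ≤ N * ‖Sp y‖ := by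
      calc ‖y‖ = ‖Q (Sp y)‖ := by rw [hQSp y]
        _ ≤ ‖Q‖ * ‖Sp y‖ := Q.le_opNorm _
        _ ≤ N * ‖Sp y‖ := by gcongr; exact le_max_left _ _
    calc ‖y‖ ^ 2 ≤ (N * ‖Sp y‖) ^ 2 := by gcongr <;> positivity
      _ = ‖Sp y‖ ^ 2 * N ^ 2 := by ring
  have hhigh : ∀ y : H, ‖Sp y‖ ^ 2 ≤ M ^ 2 * ‖y‖ ^ 2 := by
    intro y
    have h1 : ‖Sp y‖ ≤ M * ‖y‖ := by
      calc ‖Sp y‖ ≤ ‖Sp‖ * ‖y‖ := Sp.le_opNorm _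
        _ ≤ M * ‖y‖ := by gcongr; exact le_add_of_nonneg_right zero_le_one
    calc ‖Sp y‖ ^ 2 ≤ (M * ‖y‖) ^ 2 := by gcongr <;> positivity
      _ = M ^ 2 * ‖y‖ ^ 2 := by ring
  refine ⟨A / N, B * M, by positivity, by positivity, fun x => ?_⟩
  have hrw : (fun i => (⟪T i (C x), T i (C' x)⟫).re) = fun i => ‖Sp (T i x)‖ ^ 2 :=
    funext fun i => key i x
  rw [hrw]
  obtain ⟨hf1, hf2⟩ := hframe x
  by_cases hs : Summable (fun i => ‖T i x‖ ^ 2)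
  · have hsum_r : Summable (fun i => ‖Sp (T i x)‖ ^ 2) := by
      refine Summable.of_nonneg_of_le (fun i => by positivity)
        (fun i => hhigh (T i x)) (hs.mul_left (M ^ 2))
    constructor
    · have h1 : ∑' i, ‖T i x‖ ^ 2 / N ^ 2 ≤ ∑' i, ‖Sp (T i x)‖ ^ 2 :=
        (hs.div_const _).tsum_le_tsum (fun i => hlow (T i x)) hsum_r
      have h2 : ∑' i, ‖T i x‖ ^ 2 / N ^ 2 = (∑' i, ‖T i x‖ ^ 2) / N ^ 2 :=
        tsum_div_const
      have h3 : A ^ 2 * ‖ContinuousLinearMap.adjoint K x‖ ^ 2 / N ^ 2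
          ≤ (∑' i, ‖T i x‖ ^ 2) / N ^ 2 := by gcongr
      calc (A / N) ^ 2 * ‖ContinuousLinearMap.adjoint K x‖ ^ 2
          = A ^ 2 * ‖ContinuousLinearMap.adjoint K x‖ ^ 2 / N ^ 2 := by
            field_simp
        _ ≤ (∑' i, ‖T i x‖ ^ 2) / N ^ 2 := h3
        _ = ∑' i, ‖T i x‖ ^ 2 / N ^ 2 := h2.symm
        _ ≤ ∑' i, ‖Sp (T i x)‖ ^ 2 := h1
    · have h1 : ∑' i, ‖Sp (T i x)‖ ^ 2 ≤ ∑' i, M ^ 2 * ‖T i x‖ ^ 2 :=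
        hsum_r.tsum_le_tsum (fun i => hhigh (T i x)) (hs.mul_left _)
      have h2 : ∑' i, M ^ 2 * ‖T i x‖ ^ 2 = M ^ 2 * ∑' i, ‖T i x‖ ^ 2 :=
        tsum_mul_left
      calc ∑' i, ‖Sp (T i x)‖ ^ 2 ≤ M ^ 2 * ∑' i, ‖T i x‖ ^ 2 := by rw [← h2]; exact h1
        _ ≤ M ^ 2 * (B ^ 2 * ‖x‖ ^ 2) := by gcongr
        _ = (B * M) ^ 2 * ‖x‖ ^ 2 := by ring
  · have hKzero : ‖ContinuousLinearMap.adjoint K x‖ ^ 2 = 0 := by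
      rw [tsum_eq_zero_of_not_summable hs] at hf1
      have h0 : 0 ≤ ‖ContinuousLinearMap.adjoint K x‖ ^ 2 := sq_nonneg _
      have hA2 : 0 < A ^ 2 := by positivity
      nlinarith
    have hnr : ¬ Summable (fun i => ‖Sp (T i x)‖ ^ 2) := by
      intro hr
      apply hs
      refine Summable.of_nonneg_of_le (fun i => by positivity) (fun i => ?_)
        (hr.mul_left (N ^ 2))
      have := hlow (T i x)
      rw [div_le_iff₀ (by positivity)] at this
      linarith [this]
    rw [tsum_eq_zero_of_not_summable hnr]
    constructor
    · rw [hKzero, mul_zero]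
    · positivity
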